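/- Let (X, 𝒜, μ) be a monotone measure space with μ null-additive, let f, g : X → [0, ∞] be measurable and A ∈ 𝒜. If f = g μ-a.e. on A, i.e. μ({x ∈ A : f(x) ≠ g(x)}) = 0, then ∫_A^pan f dμ = ∫_A^pan g dμ. -/

import Mathlib

open Set Filter
open scoped ENNReal NNReal Topology

variable {X : Type*}

/-- A monotone measure: vanishes on the empty set, positive on the whole space,
and monotone on measurable sets. -/
structure MonotoneMeasure [MeasurableSpace X] (mu : Set X → ℝ≥0∞) : Prop where
  empty : mu ∅ = 0
  univ_pos : 0 < mu Set.univ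
  mono : ∀ ⦃A B : Set X⦄, MeasurableSet A → MeasurableSet B → A ⊆ B → mu A ≤ mu B

/-- A finite measurable partition of `X`. -/
def IsPanPartition [MeasurableSpace X] {n : ℕ} (A : Fin n → Set X) : Prop :=
  (∀ i, MeasurableSet (A i)) ∧ Pairwise (Function.onFun Disjoint A) ∧ (⋃ i, A i) = Set.univ

/-- The `(+,·)`-based pan-integral of a nonnegative function on `X`. -/
noncomputable def panIntegral [MeasurableSpace X] (mu : Set X → ℝ≥0∞) (f : X → ℝ≥0∞) : ℝ≥0∞ :=
  ⨆ (n : ℕ) (A : Fin n → Set X) (_ : IsPanPartition A) (lam : Fin n → ℝ≥0)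
    (_ : ∀ x, ∑ i, Set.indicator (A i) (fun _ => (lam i : ℝ≥0∞)) x ≤ f x),
    ∑ i, (lam i : ℝ≥0∞) * mu (A i)

/-- The pan-integral of `f` on a set `A`, i.e. the pan-integral of `f·χ_A` on `X`. -/
noncomputable def panIntegralOn [MeasurableSpace X] (mu : Set X → ℝ≥0∞) (f : X → ℝ≥0∞)
    (A : Set X) : ℝ≥0∞ :=
  panIntegral mu (A.indicator f)

/-- Subadditivity of a set function. -/
def PanSubadditive [MeasurableSpace X] (mu : Set X → ℝ≥0∞) : Prop :=
  ∀ ⦃A B : Set X⦄, MeasurableSet A → MeasurableSet B → mu (A ∪ B) ≤ mu A + mu B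

/-- Null-additivity of a set function. -/
def PanNullAdditive [MeasurableSpace X] (mu : Set X → ℝ≥0∞) : Prop :=
  ∀ ⦃A B : Set X⦄, MeasurableSet A → MeasurableSet B → mu B = 0 → mu (A ∪ B) = mu A

/-- Continuity from below of a set function. -/
def PanContinuousFromBelow [MeasurableSpace X] (mu : Set X → ℝ≥0∞) : Prop :=
  ∀ E : ℕ → Set X, (∀ n, MeasurableSet (E n)) → Monotone E →
    Filter.Tendsto (fun n => mu (E n)) Filter.atTop (nhds (mu (⋃ n, E n)))

/-- A real-valued function is pan-integrable if the pan-integrals of its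
positive and negative parts are both finite. -/
def PanIntegrable [MeasurableSpace X] (mu : Set X → ℝ≥0∞) (f : X → ℝ) : Prop :=
  panIntegral mu (fun x => ENNReal.ofReal (f x)) < ⊤ ∧
    panIntegral mu (fun x => ENNReal.ofReal (-f x)) < ⊤

/-- The symmetric pan-integral of a real-valued function:
`∫ f⁺ dμ − ∫ f⁻ dμ`. -/
noncomputable def panIntegralReal [MeasurableSpace X] (mu : Set X → ℝ≥0∞) (f : X → ℝ) : ℝ :=
  (panIntegral mu (fun x => ENNReal.ofReal (f x))).toReal -
    (panIntegral mu (fun x => ENNReal.ofReal (-f x))).toReal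

/-- The `‖·‖_{μ,p}` functional: `(∫_E^pan |f|^p dμ)^(1/p)`. -/
noncomputable def panNorm [MeasurableSpace X] (mu : Set X → ℝ≥0∞) (E : Set X) (p : ℝ)
    (f : X → ℝ) : ℝ≥0∞ :=
  (panIntegralOn mu (fun x => ENNReal.ofReal (|f x| ^ p)) E) ^ (1 / p)

lemma panIntegralOn_le_of_ae_aux [MeasurableSpace X]
    (mu : Set X → ℝ≥0∞) (hmu : MonotoneMeasure mu) (hna : PanNullAdditive mu)
    (f g : X → ℝ≥0∞) (hf : Measurable f) (hg : Measurable g)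
    {A : Set X} (hA : MeasurableSet A)
    (hae : mu {x | x ∈ A ∧ f x ≠ g x} = 0) :
    panIntegralOn mu f A ≤ panIntegralOn mu g A := by
  classical
  set N : Set X := {x | x ∈ A ∧ f x ≠ g x} with hNdef
  have hNmeas : MeasurableSet N := by
    have h : N = A ∩ {x | f x ≠ g x} := rfl
    rw [h]
    exact hA.inter (measurableSet_eq_fun hf hg).compl
  unfold panIntegralOn panIntegral
  refine iSup_le fun n => iSup_le fun P => iSup_le fun hP => iSup_le fun lam =>
    iSup_le fun hlam => ?_
  obtain ⟨hPmeas, hPdisj, hPunion⟩ := hP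
  set Q : Fin (n + 1) → Set X := Fin.snoc (fun i => P i \ N) N with hQdef
  set lam' : Fin (n + 1) → ℝ≥0 := Fin.snoc lam 0 with hlamdef
  have hQcast : ∀ i : Fin n, Q i.castSucc = P i \ N := fun i => by
    simp [hQdef]
  have hQlast : Q (Fin.last n) = N := by simp [hQdef]
  have hlcast : ∀ i : Fin n, lam' i.castSucc = lam i := fun i => by
    simp [hlamdef]
  have hllast : lam' (Fin.last n) = 0 := by simp [hlamdef]
  have hQpart : IsPanPartition Q := by
    refine ⟨?_, ?_, ?_⟩
    · intro i
      rcases Fin.eq_castSucc_or_eq_last i with ⟨i', rfl⟩ | rfl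
      · rw [hQcast]; exact (hPmeas i').diff hNmeas
      · rw [hQlast]; exact hNmeas
    · intro i j hij
      rcases Fin.eq_castSucc_or_eq_last i with ⟨i', rfl⟩ | rfl <;>
        rcases Fin.eq_castSucc_or_eq_last j with ⟨j', rfl⟩ | rfl
      · have hne : i' ≠ j' := by
          rintro rfl; exact hij rfl
        have : Disjoint (P i' \ N) (P j' \ N) :=
          (hPdisj hne).mono
            Set.diff_subset Set.diff_subset
        rwa [Function.onFun, hQcast, hQcast]
      · rw [Function.onFun, hQcast, hQlast]
        exact Set.disjoint_sdiff_left
      · rw [Function.onFun, hQlast, hQcast]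
        exact Set.disjoint_sdiff_right
      · exact absurd rfl hij
    · apply Set.eq_univ_of_univ_subset
      intro x _
      by_cases hx : x ∈ N
      · exact Set.mem_iUnion.2 ⟨Fin.last n, hQlast ▸ hx⟩
      · have : x ∈ ⋃ i, P i := hPunion ▸ Set.mem_univ x
        obtain ⟨i, hi⟩ := Set.mem_iUnion.1 this
        exact Set.mem_iUnion.2 ⟨i.castSucc, (hQcast i) ▸ ⟨hi, hx⟩⟩
  have hcon : ∀ x, ∑ i, Set.indicator (Q i) (fun _ => (lam' i : ℝ≥0∞)) x
      ≤ A.indicator g x := by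
    intro x
    rw [Fin.sum_univ_castSucc]
    simp only [hQcast, hQlast, hlcast, hllast, ENNReal.coe_zero]
    rw [show Set.indicator N (fun _ => (0 : ℝ≥0∞)) x = 0 by simp, add_zero]
    by_cases hx : x ∈ N
    · have hz : ∀ i : Fin n,
          Set.indicator (P i \ N) (fun _ => (lam i : ℝ≥0∞)) x = 0 := fun i =>
        Set.indicator_of_notMem (fun h => h.2 hx) _
      simp only [hz, Finset.sum_const_zero]
      exact zero_le
    · have hle : ∑ i : Fin n, Set.indicator (P i \ N) (fun _ => (lam i : ℝ≥0∞)) x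
          ≤ A.indicator f x := by
        refine le_trans (Finset.sum_le_sum fun i _ => ?_) (hlam x)
        exact Set.indicator_le_indicator_of_subset Set.diff_subset
          (fun _ => zero_le) x
      have hfg : A.indicator f x = A.indicator g x := by
        by_cases hxA : x ∈ A
        · rw [Set.indicator_of_mem hxA, Set.indicator_of_mem hxA]
          by_contra hne
          exact hx ⟨hxA, hne⟩
        · rw [Set.indicator_of_notMem hxA, Set.indicator_of_notMem hxA]
      exact hfg ▸ hle
  have hsum : ∑ i, (lam i : ℝ≥0∞) * mu (P i) = ∑ i, (lam' i : ℝ≥0∞) * mu (Q i) := by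
    rw [Fin.sum_univ_castSucc]
    simp only [hQcast, hQlast, hlcast, hllast, ENNReal.coe_zero, zero_mul, add_zero]
    refine Finset.sum_congr rfl fun i _ => ?_
    have hmuN : mu (P i ∩ N) = 0 :=
      le_antisymm (hae ▸ hmu.mono ((hPmeas i).inter hNmeas) hNmeas
        Set.inter_subset_right) (zero_le)
    have h2 := hna ((hPmeas i).diff hNmeas) ((hPmeas i).inter hNmeas) hmuN
    rw [Set.diff_union_inter] at h2
    rw [← h2]
  rw [hsum]
  exact le_iSup_of_le (n + 1) (le_iSup_of_le Q (le_iSup_of_le hQpart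
    (le_iSup_of_le lam' (le_iSup_of_le hcon le_rfl))))

theorem panIntegralOn_congr_ae_of_nullAdditive [MeasurableSpace X]
    (mu : Set X → ℝ≥0∞) (hmu : MonotoneMeasure mu) (hna : PanNullAdditive mu)
    (f g : X → ℝ≥0∞) (hf : Measurable f) (hg : Measurable g)
    {A : Set X} (hA : MeasurableSet A)
    (hae : mu {x | x ∈ A ∧ f x ≠ g x} = 0) :
    panIntegralOn mu f A = panIntegralOn mu g A := by
  refine le_antisymm
    (panIntegralOn_le_of_ae_aux mu hmu hna f g hf hg hA hae)
    (panIntegralOn_le_of_ae_aux mu hmu hna g f hg hf hA ?_)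
  convert hae using 2
  ext x
  simp [ne_comm]
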